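/- Let P(t) = a₃t³ + a₂t² + a₁t + a₀ and Q(t) = b₄t⁴ + b₃t³ + b₂t² + b₁t + b₀ be real polynomials. Suppose there is a nonempty open interval I ⊆ ℝ on which P > 0 and Q > 0 and on which the pair f = ln P, g = ln Q satisfies the V1 truncated system (1/4)·f'' = −e^{g − 2f} and (1/4)·g'' = −e^{−2g + 2f}. Then the coefficients satisfy exactly one of the following two sets of relations. Set A: a₃ = 4/3, b₄ = 4/3, a₁ = a₂²/4, b₃ = (4/3)a₂, b₂ = a₂²/2, b₁ = (a₂³ − 16 a₀)/8, b₀ = (a₂⁴ − 32 a₀ a₂)/64. Set B: a₃ = −4/3, b₄ = 4/3, a₁ = −a₂²/4, b₃ = −(4/3)a₂, b₂ = a₂²/2, b₁ = (16 a₀ − a₂³)/8, b₀ = (a₂⁴ − 32 a₀ a₂)/64. Conversely, any coefficients satisfying Set A or Set B yield a solution on every open interval where P > 0 and Q > 0. -/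

import Mathlib

open Real Polynomial

private lemma quarticD (c4 c3 c2 c1 c0 t : ℝ) :
    HasDerivAt (fun x : ℝ => c4*x^4 + c3*x^3 + c2*x^2 + c1*x + c0)
      (4*c4*t^3 + 3*c3*t^2 + 2*c2*t + c1) t := by
  have h := ((((hasDerivAt_pow 4 t).const_mul c4).add ((hasDerivAt_pow 3 t).const_mul c3)).add
      ((hasDerivAt_pow 2 t).const_mul c2)).add (((hasDerivAt_id t).const_mul c1).add
      (hasDerivAt_const t c0))
  convert h using 1
  · rfl
  · rfl
  · funext x; simp only [id, Pi.add_apply]; ring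
  · push_cast; ring

private lemma cubicD (c3 c2 c1 c0 t : ℝ) :
    HasDerivAt (fun x : ℝ => c3*x^3 + c2*x^2 + c1*x + c0)
      (3*c3*t^2 + 2*c2*t + c1) t := by
  have h := (((hasDerivAt_pow 3 t).const_mul c3).add ((hasDerivAt_pow 2 t).const_mul c2)).add
      (((hasDerivAt_id t).const_mul c1).add (hasDerivAt_const t c0))
  convert h using 1
  · rfl
  · rfl
  · funext x; simp only [id, Pi.add_apply]; ring
  · push_cast; ring

private lemma quadD (c2 c1 c0 t : ℝ) :
    HasDerivAt (fun x : ℝ => c2*x^2 + c1*x + c0) (2*c2*t + c1) t := by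
  have h := ((hasDerivAt_pow 2 t).const_mul c2).add
      (((hasDerivAt_id t).const_mul c1).add (hasDerivAt_const t c0))
  convert h using 1
  · rfl
  · rfl
  · funext x; simp only [id, Pi.add_apply]; ring
  · push_cast; ring

private lemma logD2 (F F1 F2 : ℝ → ℝ)
    (hF1 : ∀ x, HasDerivAt F (F1 x) x) (hF2 : ∀ x, HasDerivAt F1 (F2 x) x)
    {s : Set ℝ} (hs : IsOpen s) (hpos : ∀ x ∈ s, 0 < F x) {t : ℝ} (ht : t ∈ s) :
    deriv (deriv (fun x => Real.log (F x))) t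
      = (F2 t * F t - F1 t * F1 t) / (F t)^2 := by
  have hEv : deriv (fun y => Real.log (F y)) =ᶠ[nhds t] fun x => F1 x / F x := by
    filter_upwards [hs.mem_nhds ht] with x hx
    exact ((hF1 x).log (ne_of_gt (hpos x hx))).deriv
  rw [hEv.deriv_eq]
  exact (((hF2 t).div (hF1 t) (ne_of_gt (hpos t ht)))).deriv

private lemma coeffs0 (c0 c1 c2 c3 c4 c5 c6 a b : ℝ) (hab : a < b)
    (h : ∀ t ∈ Set.Ioo a b, c6*t^6+c5*t^5+c4*t^4+c3*t^3+c2*t^2+c1*t+c0 = 0) :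
    c0=0 ∧ c1=0 ∧ c2=0 ∧ c3=0 ∧ c4=0 ∧ c5=0 ∧ c6=0 := by
  set p : Polynomial ℝ := C c6*X^6 + C c5*X^5 + C c4*X^4 + C c3*X^3 + C c2*X^2 + C c1*X + C c0
    with hp
  have hz : p = 0 := by
    refine p.eq_zero_of_infinite_isRoot ((Set.Ioo_infinite hab).mono ?_)
    intro t ht
    have := h t ht
    simp only [Set.mem_setOf_eq, IsRoot, hp, eval_add, eval_mul, eval_pow, eval_C, eval_X]
    linarith
  refine ⟨?_, ?_, ?_, ?_, ?_, ?_, ?_⟩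
  · have := congrArg (fun q => Polynomial.coeff q 0) hz; simpa [hp, coeff_C] using this
  · have := congrArg (fun q => Polynomial.coeff q 1) hz; simpa [hp, coeff_C] using this
  · have := congrArg (fun q => Polynomial.coeff q 2) hz; simpa [hp, coeff_C] using this
  · have := congrArg (fun q => Polynomial.coeff q 3) hz; simpa [hp, coeff_C] using this
  · have := congrArg (fun q => Polynomial.coeff q 4) hz; simpa [hp, coeff_C] using this
  · have := congrArg (fun q => Polynomial.coeff q 5) hz; simpa [hp, coeff_C] using this
  · have := congrArg (fun q => Polynomial.coeff q 6) hz; simpa [hp, coeff_C] using this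

-- the exp identities
private lemma exp1 {p q : ℝ} (hp : 0 < p) (hq : 0 < q) :
    Real.exp (Real.log q - 2 * Real.log p) = q / p^2 := by
  rw [Real.exp_sub, Real.exp_log hq,
    show (2:ℝ) * Real.log p = Real.log p + Real.log p by ring, Real.exp_add,
    Real.exp_log hp]
  ring

private lemma exp2 {p q : ℝ} (hp : 0 < p) (hq : 0 < q) :
    Real.exp (-(2 * Real.log q) + 2 * Real.log p) = p^2 / q^2 := by
  rw [show -(2 * Real.log q) + 2 * Real.log p
      = (Real.log p + Real.log p) - (Real.log q + Real.log q) by ring,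
    Real.exp_sub, Real.exp_add, Real.exp_add, Real.exp_log hp, Real.exp_log hq]
  ring

section Main
variable (a₀ a₁ a₂ a₃ b₀ b₁ b₂ b₃ b₄ : ℝ)

-- forward reduction to polynomial identities on the interval
set_option maxHeartbeats 1000000 in
private lemma poly_ids {a b : ℝ}
    (hpos : ∀ t ∈ Set.Ioo a b,
      0 < (a₃ * t^3 + a₂ * t^2 + a₁ * t + a₀) ∧ 0 < (b₄ * t^4 + b₃ * t^3 + b₂ * t^2 + b₁ * t + b₀))
    (hode : ∀ t ∈ Set.Ioo a b,
      (1/4) * deriv (deriv (fun x => Real.log (a₃ * x^3 + a₂ * x^2 + a₁ * x + a₀))) t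
          = -Real.exp (Real.log (b₄ * t^4 + b₃ * t^3 + b₂ * t^2 + b₁ * t + b₀)
              - 2 * Real.log (a₃ * t^3 + a₂ * t^2 + a₁ * t + a₀)) ∧
      (1/4) * deriv (deriv (fun x => Real.log (b₄ * x^4 + b₃ * x^3 + b₂ * x^2 + b₁ * x + b₀))) t
          = -Real.exp (-(2 * Real.log (b₄ * t^4 + b₃ * t^3 + b₂ * t^2 + b₁ * t + b₀))
              + 2 * Real.log (a₃ * t^3 + a₂ * t^2 + a₁ * t + a₀))) :
    ∀ t ∈ Set.Ioo a b,
      ((2*(3*a₃)*t + 2*a₂) * (a₃*t^3 + a₂*t^2 + a₁*t + a₀)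
        - (3*a₃*t^2 + 2*a₂*t + a₁)^2 + 4*(b₄*t^4 + b₃*t^3 + b₂*t^2 + b₁*t + b₀) = 0) ∧
      ((3*(4*b₄)*t^2 + 2*(3*b₃)*t + 2*b₂) * (b₄*t^4 + b₃*t^3 + b₂*t^2 + b₁*t + b₀)
        - (4*b₄*t^3 + 3*b₃*t^2 + 2*b₂*t + b₁)^2
        + 4*(a₃*t^3 + a₂*t^2 + a₁*t + a₀)^2 = 0) := by
  intro t ht
  have hP0 := (hpos t ht).1
  have hQ0 := (hpos t ht).2
  have hPd : ∀ x : ℝ, HasDerivAt (fun x : ℝ => a₃*x^3 + a₂*x^2 + a₁*x + a₀)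
      (3*a₃*x^2 + 2*a₂*x + a₁) x := fun x => cubicD a₃ a₂ a₁ a₀ x
  have hPdd : ∀ x : ℝ, HasDerivAt (fun x : ℝ => 3*a₃*x^2 + 2*a₂*x + a₁)
      (2*(3*a₃)*x + 2*a₂) x := fun x => quadD (3*a₃) (2*a₂) a₁ x
  have hQd : ∀ x : ℝ, HasDerivAt (fun x : ℝ => b₄*x^4 + b₃*x^3 + b₂*x^2 + b₁*x + b₀)
      (4*b₄*x^3 + 3*b₃*x^2 + 2*b₂*x + b₁) x := fun x => quarticD b₄ b₃ b₂ b₁ b₀ x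
  have hQdd : ∀ x : ℝ, HasDerivAt (fun x : ℝ => 4*b₄*x^3 + 3*b₃*x^2 + 2*b₂*x + b₁)
      (3*(4*b₄)*x^2 + 2*(3*b₃)*x + 2*b₂) x := fun x => cubicD (4*b₄) (3*b₃) (2*b₂) b₁ x
  have hD2P := logD2 _ _ _ hPd hPdd isOpen_Ioo (fun x hx => (hpos x hx).1) ht
  have hD2Q := logD2 _ _ _ hQd hQdd isOpen_Ioo (fun x hx => (hpos x hx).2) ht
  have h1 := (hode t ht).1
  have h2 := (hode t ht).2
  rw [hD2P, exp1 hP0 hQ0] at h1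
  rw [hD2Q, exp2 hP0 hQ0] at h2
  have hPne : (a₃ * t^3 + a₂ * t^2 + a₁ * t + a₀) ≠ 0 := ne_of_gt hP0
  have hQne : (b₄ * t^4 + b₃ * t^3 + b₂ * t^2 + b₁ * t + b₀) ≠ 0 := ne_of_gt hQ0
  constructor
  · have key1 : ((2*(3*a₃)*t + 2*a₂) * (a₃*t^3 + a₂*t^2 + a₁*t + a₀)
        - (3*a₃*t^2 + 2*a₂*t + a₁)^2 + 4*(b₄*t^4 + b₃*t^3 + b₂*t^2 + b₁*t + b₀))
        * (a₃ * t^3 + a₂ * t^2 + a₁ * t + a₀)^2 = 0 := by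
      have hP2 : (a₃ * t^3 + a₂ * t^2 + a₁ * t + a₀)^2 ≠ 0 := pow_ne_zero 2 hPne
      rw [mul_div_assoc', div_eq_iff hP2, neg_mul, div_mul_cancel₀ _ hP2] at h1
      linear_combination (4 * (a₃ * t^3 + a₂ * t^2 + a₁ * t + a₀)^2) * h1
    exact (mul_eq_zero.1 key1).resolve_right (pow_ne_zero 2 hPne)
  · have key2 : ((3*(4*b₄)*t^2 + 2*(3*b₃)*t + 2*b₂) * (b₄*t^4 + b₃*t^3 + b₂*t^2 + b₁*t + b₀)
        - (4*b₄*t^3 + 3*b₃*t^2 + 2*b₂*t + b₁)^2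
        + 4*(a₃*t^3 + a₂*t^2 + a₁*t + a₀)^2)
        * (b₄ * t^4 + b₃ * t^3 + b₂ * t^2 + b₁ * t + b₀)^2 = 0 := by
      have hQ2 : (b₄ * t^4 + b₃ * t^3 + b₂ * t^2 + b₁ * t + b₀)^2 ≠ 0 := pow_ne_zero 2 hQne
      rw [mul_div_assoc', div_eq_iff hQ2, neg_mul, div_mul_cancel₀ _ hQ2] at h2
      linear_combination (4 * (b₄ * t^4 + b₃ * t^3 + b₂ * t^2 + b₁ * t + b₀)^2) * h2
    exact (mul_eq_zero.1 key2).resolve_right (pow_ne_zero 2 hQne)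

end Main


/-- The coefficient relations "Set A". -/
def V1SetA (a₀ a₁ a₂ a₃ b₀ b₁ b₂ b₃ b₄ : ℝ) : Prop :=
  a₃ = 4/3 ∧ b₄ = 4/3 ∧ a₁ = a₂^2/4 ∧ b₃ = (4/3) * a₂ ∧ b₂ = a₂^2/2 ∧
    b₁ = (a₂^3 - 16 * a₀)/8 ∧ b₀ = (a₂^4 - 32 * a₀ * a₂)/64

/-- The coefficient relations "Set B". -/
def V1SetB (a₀ a₁ a₂ a₃ b₀ b₁ b₂ b₃ b₄ : ℝ) : Prop :=
  a₃ = -(4/3) ∧ b₄ = 4/3 ∧ a₁ = -(a₂^2/4) ∧ b₃ = -((4/3) * a₂) ∧ b₂ = a₂^2/2 ∧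
    b₁ = (16 * a₀ - a₂^3)/8 ∧ b₀ = (a₂^4 - 32 * a₀ * a₂)/64

set_option maxHeartbeats 1000000 in
/-- A cubic `P` and a quartic `Q` give a solution `(ln P, ln Q)` of the V1 truncated system
`(1/4) f'' = −e^{g−2f}`, `(1/4) g'' = −e^{−2g+2f}` on some nonempty open interval where
`P, Q > 0` if and only if their coefficients satisfy exactly one of the two sets of
relations Set A and Set B; conversely, coefficients from Set A or Set B yield a solution
on every open interval where `P > 0` and `Q > 0`. -/
theorem V1_truncation_polynomial_classification
    (a₀ a₁ a₂ a₃ b₀ b₁ b₂ b₃ b₄ : ℝ) (P Q : ℝ → ℝ)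
    (hP : P = fun t => a₃ * t^3 + a₂ * t^2 + a₁ * t + a₀)
    (hQ : Q = fun t => b₄ * t^4 + b₃ * t^3 + b₂ * t^2 + b₁ * t + b₀) :
    ((∃ a b : ℝ, a < b ∧
        (∀ t ∈ Set.Ioo a b, 0 < P t ∧ 0 < Q t) ∧
        (∀ t ∈ Set.Ioo a b,
          (1/4) * deriv (deriv (fun x => Real.log (P x))) t
              = -Real.exp (Real.log (Q t) - 2 * Real.log (P t)) ∧
          (1/4) * deriv (deriv (fun x => Real.log (Q x))) t
              = -Real.exp (-(2 * Real.log (Q t)) + 2 * Real.log (P t)))) →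
      Xor' (V1SetA a₀ a₁ a₂ a₃ b₀ b₁ b₂ b₃ b₄) (V1SetB a₀ a₁ a₂ a₃ b₀ b₁ b₂ b₃ b₄)) ∧
    ((V1SetA a₀ a₁ a₂ a₃ b₀ b₁ b₂ b₃ b₄ ∨ V1SetB a₀ a₁ a₂ a₃ b₀ b₁ b₂ b₃ b₄) →
      ∀ a b : ℝ, (∀ t ∈ Set.Ioo a b, 0 < P t ∧ 0 < Q t) →
        ∀ t ∈ Set.Ioo a b,
          (1/4) * deriv (deriv (fun x => Real.log (P x))) t
              = -Real.exp (Real.log (Q t) - 2 * Real.log (P t)) ∧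
          (1/4) * deriv (deriv (fun x => Real.log (Q x))) t
              = -Real.exp (-(2 * Real.log (Q t)) + 2 * Real.log (P t))) := by
  constructor
  · rintro ⟨a, b, hab, hpos, hode⟩
    simp only [hP, hQ] at hpos hode
    have ids := poly_ids a₀ a₁ a₂ a₃ b₀ b₁ b₂ b₃ b₄ hpos hode
    have E1 := coeffs0 (2*a₀*a₂ - a₁^2 + 4*b₀) (6*a₀*a₃ - 2*a₁*a₂ + 4*b₁)
      (-2*a₂^2 + 4*b₂) (-4*a₂*a₃ + 4*b₃) (-3*a₃^2 + 4*b₄) 0 0 a b hab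
      (fun t ht => by linear_combination (ids t ht).1)
    have E2 := coeffs0 (2*b₀*b₂ - b₁^2 + 4*a₀^2) (-2*b₁*b₂ + 6*b₀*b₃ + 8*a₀*a₁)
      (-2*b₂^2 + 12*b₀*b₄ + 4*a₁^2 + 8*a₀*a₂) (-4*b₂*b₃ + 4*b₁*b₄ + 8*a₁*a₂ + 8*a₀*a₃)
      (-2*b₂*b₄ - 3*b₃^2 + 4*a₂^2 + 8*a₁*a₃) (-6*b₃*b₄ + 8*a₂*a₃) (-4*b₄^2 + 4*a₃^2) a b hab
      (fun t ht => by linear_combination (ids t ht).2)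
    obtain ⟨hc0, hc1, hc2, hc3, hc4, -, -⟩ := E1
    obtain ⟨hd0, hd1, hd2, hd3, hd4, hd5, hd6⟩ := E2
    have hmid : (a+b)/2 ∈ Set.Ioo a b := ⟨by linarith, by linarith⟩
    have hP0 := (hpos _ hmid).1
    have ha3 : a₃ = 0 ∨ a₃ = 4/3 ∨ a₃ = -(4/3) := by
      have h9 : a₃^2 * ((3*a₃-4)*(3*a₃+4)) = 0 := by
        linear_combination (-(3*a₃^2+4*b₄))*hc4 + (-4)*hd6
      rcases mul_eq_zero.1 h9 with h | h
      · exact Or.inl (sq_eq_zero_iff.1 h)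
      · rcases mul_eq_zero.1 h with h | h
        · exact Or.inr (Or.inl (by linarith))
        · exact Or.inr (Or.inr (by linarith))
    rcases ha3 with h3 | h3 | h3
    · exfalso
      subst h3
      have hb4 : b₄ = 0 := by linear_combination hc4/4
      have hb3 : b₃ = 0 := by linear_combination hc3/4
      subst hb4; subst hb3
      have ha2 : a₂ = 0 := by nlinarith [hd4]
      subst ha2
      have hb2 : b₂ = 0 := by linear_combination hc2/4
      have hb1 : b₁ = 0 := by linear_combination hc1/4
      subst hb2; subst hb1
      have ha1 : a₁ = 0 := by nlinarith [hd2]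
      subst ha1
      have hb0 : b₀ = 0 := by linear_combination hc0/4
      subst hb0
      have ha0 : a₀ = 0 := by nlinarith [hd0]
      subst ha0
      norm_num at hP0
    · subst h3
      have hb4 : b₄ = 4/3 := by linear_combination hc4/4
      have hb3 : b₃ = (4/3)*a₂ := by linear_combination hc3/4
      have hb2 : b₂ = a₂^2/2 := by linear_combination hc2/4
      subst hb4; subst hb3; subst hb2
      have ha1 : a₁ = a₂^2/4 := by linear_combination (3/32)*hd4
      subst ha1
      have hb1 : b₁ = (a₂^3 - 16*a₀)/8 := by linear_combination hc1/4
      have hb0 : b₀ = (a₂^4 - 32*a₀*a₂)/64 := by linear_combination hc0/4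
      exact Or.inl ⟨⟨rfl, rfl, rfl, rfl, rfl, hb1, hb0⟩,
        fun hB => by have h := hB.1; norm_num at h⟩
    · subst h3
      have hb4 : b₄ = 4/3 := by linear_combination hc4/4
      have hb3 : b₃ = -((4/3)*a₂) := by linear_combination hc3/4
      have hb2 : b₂ = a₂^2/2 := by linear_combination hc2/4
      subst hb4; subst hb3; subst hb2
      have ha1 : a₁ = -(a₂^2/4) := by linear_combination (-3/32)*hd4
      subst ha1
      have hb1 : b₁ = (16*a₀ - a₂^3)/8 := by linear_combination hc1/4
      have hb0 : b₀ = (a₂^4 - 32*a₀*a₂)/64 := by linear_combination hc0/4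
      exact Or.inr ⟨⟨rfl, rfl, rfl, rfl, rfl, hb1, hb0⟩,
        fun hA => by have h := hA.1; norm_num at h⟩
  · intro h a b hpos t ht
    simp only [hP, hQ] at hpos ⊢
    have hP0 := (hpos t ht).1
    have hQ0 := (hpos t ht).2
    have hPne := ne_of_gt hP0
    have hQne := ne_of_gt hQ0
    have hPd : ∀ x : ℝ, HasDerivAt (fun x : ℝ => a₃*x^3 + a₂*x^2 + a₁*x + a₀)
        (3*a₃*x^2 + 2*a₂*x + a₁) x := fun x => cubicD a₃ a₂ a₁ a₀ x
    have hPdd : ∀ x : ℝ, HasDerivAt (fun x : ℝ => 3*a₃*x^2 + 2*a₂*x + a₁)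
        (2*(3*a₃)*x + 2*a₂) x := fun x => quadD (3*a₃) (2*a₂) a₁ x
    have hQd : ∀ x : ℝ, HasDerivAt (fun x : ℝ => b₄*x^4 + b₃*x^3 + b₂*x^2 + b₁*x + b₀)
        (4*b₄*x^3 + 3*b₃*x^2 + 2*b₂*x + b₁) x := fun x => quarticD b₄ b₃ b₂ b₁ b₀ x
    have hQdd : ∀ x : ℝ, HasDerivAt (fun x : ℝ => 4*b₄*x^3 + 3*b₃*x^2 + 2*b₂*x + b₁)
        (3*(4*b₄)*x^2 + 2*(3*b₃)*x + 2*b₂) x := fun x => cubicD (4*b₄) (3*b₃) (2*b₂) b₁ x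
    have hD2P := logD2 _ _ _ hPd hPdd isOpen_Ioo (fun x hx => (hpos x hx).1) ht
    have hD2Q := logD2 _ _ _ hQd hQdd isOpen_Ioo (fun x hx => (hpos x hx).2) ht
    rw [hD2P, hD2Q, exp1 hP0 hQ0, exp2 hP0 hQ0]
    rcases h with hA | hB
    · obtain ⟨rfl, rfl, rfl, rfl, rfl, rfl, rfl⟩ := hA
      constructor
      · ring
      · ring
    · obtain ⟨rfl, rfl, rfl, rfl, rfl, rfl, rfl⟩ := hB
      constructor
      · ring
      · ring
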